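/- Define s₁ acting on (f₀, f₁) ∈ (ℂ*)² with parameters a₀, a₁, b ∈ ℂ* by s₁(f₀) = f₀(a₀a₁ + b f₀ f₁)/(a₁(a₀ + b f₀ f₁)), s₁(f₁) = a₁ f₁ (a₀ + b f₀ f₁)/(a₀a₁ + b f₀ f₁), together with s₁: (a₀,a₁,b) ↦ (a₀a₁², a₁⁻¹, a₁b). Then s₁ is an involution: applying s₁ twice returns (a₀, a₁, b, f₀, f₁) to its original values (away from the singular locus where denominators vanish). -/

import Mathlib

/-- The birational action of `s₁` on `(a₀, a₁, b, f₀, f₁)` is an involution,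
away from the singular locus. -/
theorem s1_birational_involution
    (a₀ a₁ b f₀ f₁ : ℂ) (h₀ : a₀ ≠ 0) (h₁ : a₁ ≠ 0) (hb : b ≠ 0)
    (hf₀ : f₀ ≠ 0) (hf₁ : f₁ ≠ 0)
    (hd₁ : a₀ + b * f₀ * f₁ ≠ 0) (hd₂ : a₀ * a₁ + b * f₀ * f₁ ≠ 0) :
    let S : ℂ × ℂ × ℂ × ℂ × ℂ → ℂ × ℂ × ℂ × ℂ × ℂ :=
      fun x => match x with
      | (a₀, a₁, b, f₀, f₁) =>
        (a₀ * a₁ ^ 2, a₁⁻¹, a₁ * b,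
         f₀ * (a₀ * a₁ + b * f₀ * f₁) / (a₁ * (a₀ + b * f₀ * f₁)),
         a₁ * f₁ * (a₀ + b * f₀ * f₁) / (a₀ * a₁ + b * f₀ * f₁))
    S (S (a₀, a₁, b, f₀, f₁)) = (a₀, a₁, b, f₀, f₁) := by
  intro S
  have key : (f₀ * (a₀ * a₁ + b * f₀ * f₁) / (a₁ * (a₀ + b * f₀ * f₁))) *
      (a₁ * f₁ * (a₀ + b * f₀ * f₁) / (a₀ * a₁ + b * f₀ * f₁)) = f₀ * f₁ := by
    rw [div_mul_div_comm, div_eq_iff (by exact mul_ne_zero (mul_ne_zero h₁ hd₁) hd₂)]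
    ring
  have e₁ : a₀ * a₁ ^ 2 * a₁⁻¹ +
      a₁ * b * (f₀ * (a₀ * a₁ + b * f₀ * f₁) / (a₁ * (a₀ + b * f₀ * f₁))) *
        (a₁ * f₁ * (a₀ + b * f₀ * f₁) / (a₀ * a₁ + b * f₀ * f₁))
      = a₁ * (a₀ + b * f₀ * f₁) := by
    rw [mul_assoc (a₁ * b), key]
    field_simp
  have e₂ : a₀ * a₁ ^ 2 +
      a₁ * b * (f₀ * (a₀ * a₁ + b * f₀ * f₁) / (a₁ * (a₀ + b * f₀ * f₁))) *
        (a₁ * f₁ * (a₀ + b * f₀ * f₁) / (a₀ * a₁ + b * f₀ * f₁))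
      = a₁ * (a₀ * a₁ + b * f₀ * f₁) := by
    rw [mul_assoc (a₁ * b), key]
    ring
  simp only [S, Prod.mk.injEq, e₁, e₂]
  refine ⟨by field_simp, inv_inv a₁, by field_simp, by field_simp; exact div_self (mul_ne_zero (by rw [mul_comm f₀ b]; exact hd₂) (by rw [mul_comm f₀ b]; exact hd₁)), by field_simp; rw [div_eq_one_iff_eq (mul_ne_zero (fun h => hd₁ (by linear_combination h)) (fun h => hd₂ (by linear_combination h)))]⟩
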